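/- arXiv:2005.13504 — 2 statements merged into one kernel-verified Lean document; each statement's English description precedes it below -/
import Mathlib

section
/- Let η ∈ [0,1), H₀ > 0, t_* > 0, and let the sequence (t_i) satisfy t_0 = t_* and t_{i+1} = t_i(1+α_i) with 0 < α_i ≤ H₀·t_i^{η-1}. Then for every i, t_i ≤ (t_*^{1-η} + (1-η)·H₀·i)^{1/(1-η)}. -/
theorem grid_time_upper_bound (η H₀ tstar : ℝ) (hη : η ∈ Set.Ico (0:ℝ) 1)
    (hH₀ : 0 < H₀) (htstar : 0 < tstar)
    (N : ℕ) (t α : ℕ → ℝ)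
    (h0 : t 0 = tstar)
    (hrec : ∀ i < N, t (i+1) = t i * (1 + α i))
    (hα : ∀ i < N, 0 < α i ∧ α i ≤ H₀ * t i ^ (η - 1)) :
    ∀ i ≤ N, t i ≤ (tstar ^ (1 - η) + (1 - η) * H₀ * i) ^ (1 / (1 - η)) := by
  obtain ⟨hη0, hη1⟩ := hη
  have ha : 0 < 1 - η := by linarith
  have key : ∀ i ≤ N, 0 < t i ∧ t i ^ (1 - η) ≤ tstar ^ (1 - η) + (1 - η) * H₀ * i := by
    intro i
    induction i with
    | zero => intro _; simp [h0, htstar]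
    | succ n ih =>
      intro hi
      have hn : n < N := by omega
      obtain ⟨hpos, hle⟩ := ih (by omega)
      obtain ⟨hα0, hα1⟩ := hα n hn
      have hrec' := hrec n hn
      have hpos' : 0 < t (n+1) := by
        rw [hrec']; positivity
      refine ⟨hpos', ?_⟩
      have h1 : t (n+1) ^ (1 - η) = t n ^ (1 - η) * (1 + α n) ^ (1 - η) := by
        rw [hrec', Real.mul_rpow hpos.le (by linarith)]
      have h2 : (1 + α n) ^ (1 - η) ≤ 1 + (1 - η) * α n :=
        rpow_one_add_le_one_add_mul_self (by linarith) ha.le (by linarith)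
      have h3 : t n ^ (1 - η) * (1 + α n) ^ (1 - η)
          ≤ t n ^ (1 - η) * (1 + (1 - η) * α n) := by
        apply mul_le_mul_of_nonneg_left h2 (Real.rpow_nonneg hpos.le _)
      have h4 : t n ^ (1 - η) * α n ≤ H₀ := by
        calc t n ^ (1 - η) * α n ≤ t n ^ (1 - η) * (H₀ * t n ^ (η - 1)) := by
              apply mul_le_mul_of_nonneg_left hα1 (Real.rpow_nonneg hpos.le _)
          _ = H₀ * (t n ^ (1 - η) * t n ^ (η - 1)) := by ring
          _ = H₀ := by
              rw [← Real.rpow_add hpos]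
              norm_num
      have expand : t n ^ (1 - η) * (1 + (1 - η) * α n)
          = t n ^ (1 - η) + (1 - η) * (t n ^ (1 - η) * α n) := by ring
      have h5 : t (n+1) ^ (1 - η) ≤ t n ^ (1 - η) + (1 - η) * H₀ := by
        rw [h1, expand] at *
        nlinarith [mul_le_mul_of_nonneg_left h4 ha.le]
      push_cast
      linarith
  intro i hi
  obtain ⟨hpos, hle⟩ := key i hi
  have heq : t i = (t i ^ (1 - η)) ^ (1 / (1 - η)) := by
    rw [← Real.rpow_mul hpos.le, mul_one_div_cancel ha.ne', Real.rpow_one]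
  rw [heq]
  exact Real.rpow_le_rpow (Real.rpow_nonneg hpos.le _) hle (by positivity)
end

section
/- Under the setting of the fundamental error recursion (v_{i+1} - y_{i+1} = (I+K_i)(v_i - y_i) - Θ_i with v_0 = y_0), if additionally |(I+K_j)·ω_j| ≤ 1 for all j, then sup_{i=0,...,N} |w_i(v_i - y_i)| ≤ Σ_{l=0}^{N-1} |ω_l·w_l·Θ_l|. -/
open Finset

theorem numerical_error_estimate_contractive (n N : ℕ)
    (w ω : ℕ → ℝ) (hw : ∀ i ≤ N, 0 < w i)
    (hω : ∀ i < N, ω i = w (i+1) / w i)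
    (v y Θ : ℕ → EuclideanSpace ℝ (Fin n))
    (K : ℕ → EuclideanSpace ℝ (Fin n) →L[ℝ] EuclideanSpace ℝ (Fin n))
    (h0 : v 0 = y 0)
    (hrec : ∀ i < N, v (i+1) - y (i+1)
      = ((ContinuousLinearMap.id ℝ (EuclideanSpace ℝ (Fin n)) + K i)) (v i - y i) - Θ i)
    (hK : ∀ j < N, ‖ω j • (ContinuousLinearMap.id ℝ (EuclideanSpace ℝ (Fin n)) + K j)‖ ≤ 1) :
    ∀ i ≤ N, ‖w i • (v i - y i)‖ ≤ ∑ l ∈ Finset.range N, ‖(ω l * w l) • Θ l‖ := by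
  have key : ∀ i ≤ N, ‖w i • (v i - y i)‖ ≤ ∑ l ∈ Finset.range i, ‖(ω l * w l) • Θ l‖ := by
    intro i
    induction i with
    | zero => intro _; simp [h0]
    | succ i ih =>
      intro hiN
      have hiN' : i < N := Nat.lt_of_succ_le hiN
      have ihi := ih (le_of_lt hiN')
      have hwωi : ω i * w i = w (i+1) := by
        rw [hω i hiN', div_mul_cancel₀ _ (hw i (le_of_lt hiN')).ne']
      rw [Finset.sum_range_succ]
      have hstep : w (i+1) • (v (i+1) - y (i+1))
          = (ω i • (ContinuousLinearMap.id ℝ (EuclideanSpace ℝ (Fin n)) + K i))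
              (w i • (v i - y i)) - (ω i * w i) • Θ i := by
        rw [hrec i hiN']
        simp only [ContinuousLinearMap.smul_apply, smul_sub]
        congr 1
        rw [← smul_sub, map_smul, smul_smul, hwωi]
        rw [hwωi]
      rw [hstep]
      calc ‖(ω i • (ContinuousLinearMap.id ℝ (EuclideanSpace ℝ (Fin n)) + K i))
              (w i • (v i - y i)) - (ω i * w i) • Θ i‖
          ≤ ‖(ω i • (ContinuousLinearMap.id ℝ (EuclideanSpace ℝ (Fin n)) + K i))
              (w i • (v i - y i))‖ + ‖(ω i * w i) • Θ i‖ := norm_sub_le _ _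
        _ ≤ ‖w i • (v i - y i)‖ + ‖(ω i * w i) • Θ i‖ := by
            gcongr
            calc ‖(ω i • (ContinuousLinearMap.id ℝ (EuclideanSpace ℝ (Fin n)) + K i))
                  (w i • (v i - y i))‖
                ≤ ‖ω i • (ContinuousLinearMap.id ℝ (EuclideanSpace ℝ (Fin n)) + K i)‖
                    * ‖w i • (v i - y i)‖ := ContinuousLinearMap.le_opNorm _ _
              _ ≤ 1 * ‖w i • (v i - y i)‖ := by gcongr; exact hK i hiN'
              _ = _ := one_mul _
        _ ≤ _ := by gcongr
  intro i hi
  calc ‖w i • (v i - y i)‖ ≤ ∑ l ∈ Finset.range i, ‖(ω l * w l) • Θ l‖ := key i hi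
    _ ≤ ∑ l ∈ Finset.range N, ‖(ω l * w l) • Θ l‖ :=
      Finset.sum_le_sum_of_subset_of_nonneg (Finset.range_subset_range.2 hi)
        (fun _ _ _ => norm_nonneg _)
end
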